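/- Assume F satisfies hypothesis H3 and the semigroup action (S,X) is eventually compact and F-asymptotically compact. If A ⊆ X is a nonempty compact invariant set with J(x,F) ≠ ∅ for every x ∈ X and J(X,F) ⊆ A, then A F-attracts every bounded subset of X; hence A is the global F-attractor for (S,X). -/

import Mathlib

open Filter Set Metric Bornology Topology

universe u v

/-- A relation making the index of a net directed (reflexive, transitive, directed). -/
def DirectedLE {ι : Type*} (le : ι → ι → Prop) : Prop :=
  (∀ i, le i i) ∧ (∀ i j k, le i j → le j k → le i k) ∧ ∀ i j, ∃ k, le i k ∧ le j k

/-- Convergence of a net (indexed by `ι` with order `le`) to a filter: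
for every member `V` of the filter, eventually the net lies in `V`. -/
def NetTendsto {ι : Type*} {α : Type*} (le : ι → ι → Prop) (u : ι → α) (L : Filter α) : Prop :=
  ∀ V ∈ L, ∃ i₀, ∀ i, le i₀ i → u i ∈ V

/-- A point is a cluster point of a net, i.e. some subnet converges to it. -/
def NetClusterPt {ι : Type*} {α : Type*} [TopologicalSpace α] (le : ι → ι → Prop)
    (u : ι → α) (p : α) : Prop :=
  ∀ V ∈ nhds p, ∀ i₀, ∃ i, le i₀ i ∧ u i ∈ V

variable {S : Type u} {X : Type v}

/-- `Y` F-attracts `Z`: for every `ε > 0` there is `A ∈ F` with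
`dist (t • z, Y) < ε` for all `t ∈ A`, `z ∈ Z`. -/
def FAttracts [MetricSpace X] (φ : S → X → X) (F : Filter S) (Y Z : Set X) : Prop :=
  ∀ ε : ℝ, 0 < ε → ∃ A ∈ F, ∀ t ∈ A, ∀ z ∈ Z, Metric.infDist (φ t z) Y < ε

/-- `Y` F-absorbs `Z`: there is `A ∈ F` with `t • z ∈ Y` for all `t ∈ A`, `z ∈ Z`. -/
def FAbsorbs (φ : S → X → X) (F : Filter S) (Y Z : Set X) : Prop :=
  ∃ A ∈ F, ∀ t ∈ A, ∀ z ∈ Z, φ t z ∈ Y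

/-- `Y` is invariant: `s • Y = Y` for every `s`. -/
def SInvariant (φ : S → X → X) (Y : Set X) : Prop :=
  ∀ s : S, φ s '' Y = Y

/-- Global F-attractor: nonempty, compact, invariant, attracts every bounded set. -/
def FGlobalAttractor [MetricSpace X] (φ : S → X → X) (F : Filter S) (A : Set X) : Prop :=
  A.Nonempty ∧ IsCompact A ∧ SInvariant φ A ∧
    ∀ Z : Set X, Bornology.IsBounded Z → FAttracts φ F A Z

/-- The ω-limit set `ω(Y,F) = ⋂_{A ∈ F} closure {t • y : t ∈ A, y ∈ Y}`. -/
def omegaLim [TopologicalSpace X] (φ : S → X → X) (F : Filter S) (Y : Set X) : Set X :=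
  ⋂ A ∈ F, closure (Set.image2 φ A Y)

/-- The forward F-prolongational limit set `J(x,F)`: points `y` for which there are nets
`(t_λ)` in `S` and `(x_λ)` in `X` over a common directed set with `t_λ →_F ∞`,
`x_λ → x` and `t_λ • x_λ → y`. -/
def FJSet [TopologicalSpace X] (φ : S → X → X) (F : Filter S) (x : X) : Set X :=
  {y | ∃ (ι : Type (max u v)) (le : ι → ι → Prop) (t : ι → S) (z : ι → X),
    Nonempty ι ∧ DirectedLE le ∧ NetTendsto le t F ∧
    NetTendsto le z (nhds x) ∧ NetTendsto le (fun i => φ (t i) (z i)) (nhds y)}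

/-- F-asymptotic compactness: every net `(t_λ • x_λ)` with `(x_λ)` of bounded range
and `t_λ →_F ∞` has a cluster point (a convergent subnet). -/
def FAsympCompact [MetricSpace X] (φ : S → X → X) (F : Filter S) : Prop :=
  ∀ (ι : Type (max u v)) (le : ι → ι → Prop) (t : ι → S) (z : ι → X),
    Nonempty ι → DirectedLE le → Bornology.IsBounded (Set.range z) →
    NetTendsto le t F →
    ∃ p : X, NetClusterPt le (fun i => φ (t i) (z i)) p

/-- F-eventual boundedness: each bounded `Y` has `A ∈ F` with `A • Y` bounded. -/
def FEventuallyBounded [MetricSpace X] (φ : S → X → X) (F : Filter S) : Prop :=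
  ∀ Y : Set X, Bornology.IsBounded Y → ∃ A ∈ F, Bornology.IsBounded (Set.image2 φ A Y)

/-- F-bounded dissipativity: some bounded `D` F-absorbs every bounded subset. -/
def FBoundedDissipative [MetricSpace X] (φ : S → X → X) (F : Filter S) : Prop :=
  ∃ D : Set X, Bornology.IsBounded D ∧
    ∀ Z : Set X, Bornology.IsBounded Z → FAbsorbs φ F D Z

/-- F-point dissipativity: some bounded `D` F-absorbs every singleton. -/
def FPointDissipative [MetricSpace X] (φ : S → X → X) (F : Filter S) : Prop :=
  ∃ D : Set X, Bornology.IsBounded D ∧ ∀ x : X, FAbsorbs φ F D {x}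

/-- Eventual compactness: some `t ∈ S` maps every bounded set to a relatively compact set. -/
def FEventuallyCompact [MetricSpace X] (φ : S → X → X) : Prop :=
  ∃ t : S, ∀ Y : Set X, Bornology.IsBounded Y → IsCompact (closure (φ t '' Y))

/-- F-limit compactness: for every bounded `B` and `ε > 0` there is `A ∈ F` such that
`A • B` is covered by finitely many balls of radius `ε`. -/
def FLimitCompact [MetricSpace X] (φ : S → X → X) (F : Filter S) : Prop :=
  ∀ B : Set X, Bornology.IsBounded B → ∀ ε : ℝ, 0 < ε →
    ∃ A ∈ F, ∃ T : Set X, T.Finite ∧ Set.image2 φ A B ⊆ ⋃ c ∈ T, Metric.ball c ε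

/-- Hypothesis H₁: for all `s ∈ S`, `A ∈ F` there is `B ∈ F` with `s * B ⊆ A`. -/
def HypH1 [Mul S] (F : Filter S) : Prop :=
  ∀ s : S, ∀ A ∈ F, ∃ B ∈ F, (fun b => s * b) '' B ⊆ A

/-- Hypothesis H₃: for all `s ∈ S`, `A ∈ F` there is `B ∈ F` with `B ⊆ A * s`. -/
def HypH3 [Mul S] (F : Filter S) : Prop :=
  ∀ s : S, ∀ A ∈ F, ∃ B ∈ F, B ⊆ (fun a => a * s) '' A

/-- Hypothesis H₄: for all `s ∈ S`, `A ∈ F` there is `B ∈ F` with `B ⊆ s * A`. -/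
def HypH4 [Mul S] (F : Filter S) : Prop :=
  ∀ s : S, ∀ A ∈ F, ∃ B ∈ F, B ⊆ (fun a => s * a) '' A

lemma exists_netClusterPt {ι : Type*} {α : Type*} [TopologicalSpace α]
    (le : ι → ι → Prop) (hne : Nonempty ι) (hdir : DirectedLE le) (u : ι → α)
    {K : Set α} (hK : IsCompact K) (hu : ∀ i, u i ∈ K) :
    ∃ p ∈ K, NetClusterPt le u p := by
  haveI := hne
  haveI : Nonempty α := ⟨u (Classical.arbitrary ι)⟩
  obtain ⟨hrefl, htrans, hd⟩ := hdir
  set T : Filter α := ⨅ i, 𝓟 (u '' {j | le i j}) with hT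
  have hdirected : Directed (· ≥ ·) (fun i => (𝓟 (u '' {j | le i j}) : Filter α)) := by
    intro i j
    obtain ⟨k, hik, hjk⟩ := hd i j
    exact ⟨k, principal_mono.2 (image_mono fun m hm => htrans _ _ _ hik hm),
      principal_mono.2 (image_mono fun m hm => htrans _ _ _ hjk hm)⟩
  have hTne : T.NeBot := iInf_neBot_of_directed hdirected (fun i => by
    rw [principal_neBot_iff]
    exact ⟨u i, mem_image_of_mem u (hrefl i)⟩)
  have hle : T ≤ 𝓟 K := iInf_le_of_le (Classical.arbitrary ι)
    (principal_mono.2 (by rintro _ ⟨j, _, rfl⟩; exact hu j))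
  obtain ⟨p, hpK, hcl⟩ := hK.exists_clusterPt hle
  refine ⟨p, hpK, fun V hV i₀ => ?_⟩
  have hmem : u '' {j | le i₀ j} ∈ T := mem_iInf_of_mem i₀ (mem_principal_self _)
  obtain ⟨w, hwV, j, hj, rfl⟩ := (clusterPt_iff_nonempty.1 hcl) hV hmem
  exact ⟨j, hj, hwV⟩

lemma refine_net {ι : Type*} {α : Type*} {β : Type*} {γ : Type*} [TopologicalSpace α]
    (le : ι → ι → Prop) (hne : Nonempty ι) (hdir : DirectedLE le)
    (u : ι → α) (p : α) (hcl : NetClusterPt le u p)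
    (v : ι → β) (L : Filter β) (hv : NetTendsto le v L)
    (w : ι → γ) (L' : Filter γ) (hw : NetTendsto le w L') :
    ∃ le' : {q : ι × Set α // q.2 ∈ nhds p ∧ u q.1 ∈ q.2} →
            {q : ι × Set α // q.2 ∈ nhds p ∧ u q.1 ∈ q.2} → Prop,
      Nonempty {q : ι × Set α // q.2 ∈ nhds p ∧ u q.1 ∈ q.2} ∧ DirectedLE le' ∧
      NetTendsto le' (fun q => u q.1.1) (nhds p) ∧
      NetTendsto le' (fun q => v q.1.1) L ∧
      NetTendsto le' (fun q => w q.1.1) L' := by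
  obtain ⟨hrefl, htrans, hd⟩ := hdir
  refine ⟨fun q q' => le q.1.1 q'.1.1 ∧ q'.1.2 ⊆ q.1.2, ?_, ?_, ?_,
    fun V hV => ?_, fun V hV => ?_⟩
  · exact ⟨⟨(Classical.arbitrary ι, univ), univ_mem, mem_univ _⟩⟩
  · refine ⟨fun q => ⟨hrefl _, subset_rfl⟩,
      fun q q' q'' h h' => ⟨htrans _ _ _ h.1 h'.1, h'.2.trans h.2⟩, ?_⟩
    intro q q'
    obtain ⟨i₀, h1, h2⟩ := hd q.1.1 q'.1.1
    obtain ⟨i, hi, hui⟩ := hcl (q.1.2 ∩ q'.1.2) (inter_mem q.2.1 q'.2.1) i₀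
    exact ⟨⟨(i, q.1.2 ∩ q'.1.2), inter_mem q.2.1 q'.2.1, hui⟩,
      ⟨htrans _ _ _ h1 hi, inter_subset_left⟩,
      ⟨htrans _ _ _ h2 hi, inter_subset_right⟩⟩
  · intro W hW
    obtain ⟨i, _, hui⟩ := hcl W hW (Classical.arbitrary ι)
    exact ⟨⟨(i, W), hW, hui⟩, fun q hq => hq.2 q.2.2⟩

  · obtain ⟨i₀, hi₀⟩ := hv V hV
    exact ⟨⟨(i₀, univ), univ_mem, mem_univ _⟩, fun q hq => hi₀ _ hq.1⟩
  · obtain ⟨i₀, hi₀⟩ := hw V hV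
    exact ⟨⟨(i₀, univ), univ_mem, mem_univ _⟩, fun q hq => hi₀ _ hq.1⟩

/-- under H₃, eventual compactness and F-asymptotic compactness, a global
uniform F-attractor attracts every bounded set, hence is the global F-attractor. -/
theorem uniform_attractor_is_global_attractor
    {S : Type u} {X : Type v} [Semigroup S] [MetricSpace X]
    (φ : S → X → X) (F : Filter S) [Filter.NeBot F]
    (hact : ∀ (s t : S) (x : X), φ (s * t) x = φ s (φ t x))
    (hcont : ∀ s : S, Continuous (φ s))
    (h3 : HypH3 F) (hec : FEventuallyCompact φ) (hac : FAsympCompact φ F)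
    (A : Set X) (hne : A.Nonempty) (hcpt : IsCompact A) (hinv : SInvariant φ A)
    (hJne : ∀ x : X, (FJSet φ F x).Nonempty)
    (hJsub : (⋃ x : X, FJSet φ F x) ⊆ A) :
    (∀ Z : Set X, Bornology.IsBounded Z → FAttracts φ F A Z) ∧
      FGlobalAttractor φ F A := by
  suffices h : ∀ Z : Set X, Bornology.IsBounded Z → FAttracts φ F A Z by
    exact ⟨h, hne, hcpt, hinv, h⟩
  intro Z hZ
  by_contra hnegall
  unfold FAttracts at hnegall
  push_neg at hnegall
  obtain ⟨ε, hε, hbad⟩ := hnegall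
  obtain ⟨t₀, ht₀⟩ := hec
  -- base index: members of F ordered by reverse inclusion
  let ι₀ : Type (max u v) := ULift.{v} {B : Set S // B ∈ F}
  let le₀ : ι₀ → ι₀ → Prop := fun i j => j.down.1 ⊆ i.down.1
  have hne₀ : Nonempty ι₀ := ⟨⟨⟨Set.univ, univ_mem⟩⟩⟩
  have hdir₀ : DirectedLE le₀ := by
    refine ⟨fun i => subset_rfl, fun i j k h h' => h'.trans h, fun i j => ?_⟩
    exact ⟨⟨⟨i.down.1 ∩ j.down.1, inter_mem i.down.2 j.down.2⟩⟩,
      inter_subset_left, inter_subset_right⟩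
  -- choose bad elements factoring through t₀
  have key : ∀ i : ι₀, ∃ a : S, ∃ z : X, a ∈ i.down.1 ∧ z ∈ Z ∧
      ε ≤ infDist (φ (a * t₀) z) A := by
    intro i
    obtain ⟨B', hB', hB'sub⟩ := h3 t₀ i.down.1 i.down.2
    obtain ⟨t, htC, z, hzZ, hdist⟩ := hbad (i.down.1 ∩ B') (inter_mem i.down.2 hB')
    obtain ⟨a, haB, hat⟩ := hB'sub htC.2
    exact ⟨a, z, haB, hzZ, by rw [show a * t₀ = t from hat]; exact hdist⟩
  choose a z ha hz hdist using key
  let y : ι₀ → X := fun i => φ t₀ (z i)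
  have hadiv : NetTendsto le₀ a F := by
    intro V hV
    exact ⟨⟨⟨V, hV⟩⟩, fun i hi => hi (ha i)⟩
  have hKc : IsCompact (closure (φ t₀ '' Z)) := ht₀ Z hZ
  have hyK : ∀ i, y i ∈ closure (φ t₀ '' Z) :=
    fun i => subset_closure (mem_image_of_mem _ (hz i))
  obtain ⟨x, -, hxcl⟩ := exists_netClusterPt le₀ hne₀ hdir₀ y hKc hyK
  obtain ⟨le₂, hne₂, hdir₂, hy₂, hadiv₂, -⟩ :=
    refine_net le₀ hne₀ hdir₀ y x hxcl a F hadiv a F hadiv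
  have hbd₂ : Bornology.IsBounded
      (Set.range (fun q : {q : ι₀ × Set X // q.2 ∈ nhds x ∧ y q.1 ∈ q.2} => y q.1.1)) := by
    refine hKc.isBounded.subset ?_
    rintro _ ⟨q, rfl⟩
    exact hyK _
  obtain ⟨p, hpcl⟩ := hac _ le₂ (fun q => a q.1.1) (fun q => y q.1.1)
    hne₂ hdir₂ hbd₂ hadiv₂
  obtain ⟨le₃, hne₃, hdir₃, hφ₃, hadiv₃, hy₃⟩ :=
    refine_net le₂ hne₂ hdir₂ (fun q => φ (a q.1.1) (y q.1.1)) p hpcl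
      (fun q => a q.1.1) F hadiv₂ (fun q => y q.1.1) (nhds x) hy₂
  have hpJ : p ∈ FJSet φ F x :=
    ⟨_, le₃, fun r => a r.1.1.1.1, fun r => y r.1.1.1.1,
      hne₃, hdir₃, hadiv₃, hy₃, hφ₃⟩
  have hpA : p ∈ A := hJsub (mem_iUnion.2 ⟨x, hpJ⟩)
  have hple : ε ≤ infDist p A := by
    by_contra hlt
    push_neg at hlt
    have hopen : IsOpen {w : X | infDist w A < ε} :=
      isOpen_lt (continuous_infDist_pt A) continuous_const
    obtain ⟨r₀, hr₀⟩ := hφ₃ {w : X | infDist w A < ε} (hopen.mem_nhds hlt)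
    have h1 := hr₀ r₀ (hdir₃.1 r₀)
    simp only [mem_setOf_eq] at h1
    have h2 := hdist r₀.1.1.1.1
    rw [hact] at h2
    exact absurd h1 (not_lt.2 h2)
  rw [infDist_zero_of_mem hpA] at hple
  exact absurd hple (not_le.2 hε)
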